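/- Let P, Q be integers with P ≥ 1, Q ≥ 6, gcd(P,Q) = 1. For m ≥ 1 let C_m := (144Q)^{−m}·∏_{k=0}^{m−1} (12Qk + Q + 6P)(12Qk + 5Q + 6P) / ((Qk + Q + P)(k+1)) ∈ ℚ and C_0 := 1. Let u := 1728·q·(∏_{n≥1}(1 − qⁿ)²⁴)·(E₄)⁻³ ∈ ℚ[[q]] (the q-expansion of 1728/j, where j is the absolute modular invariant), and define g ∈ ℚ[[q]] by letting the coefficient of qⁿ in g be ∑_{m=0}^{n} C_m·(coefficient of qⁿ in u^m). Then for every integer n ≥ 1 such that p := Qn + P is prime: the coefficient of qⁿ in g has p-adic valuation exactly −1, and for every 0 ≤ m ≤ n − 1 the coefficient of q^m in g has nonnegative p-adic valuation. -/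

import Mathlib

/-- The weight `4` Eisenstein series `E₄ = 1 + 240·∑_{n≥1} σ₃(n)·qⁿ` as a formal power series. -/
noncomputable def E4 : PowerSeries ℚ :=
  PowerSeries.mk fun n => if n = 0 then 1 else 240 * ∑ d ∈ n.divisors, (d : ℚ) ^ 3

/-- `Φ` is the infinite product `∏_{n≥1}(1 − qⁿ)` in `ℚ[[q]]`, characterized by the fact
that its coefficients up to `q^N` agree with those of the finite product
`∏_{n=1}^{N}(1 − qⁿ)` for every `N` (the `n`-th factor is `≡ 1 mod qⁿ`). -/
def IsEulerProd (Φ : PowerSeries ℚ) : Prop :=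
  ∀ N k : ℕ, k ≤ N →
    PowerSeries.coeff k Φ =
      PowerSeries.coeff k (∏ n ∈ Finset.range N, (1 - (PowerSeries.X : PowerSeries ℚ) ^ (n + 1)))

namespace HypAux

/-- The subring of rationals that are integers. -/
def Rint : Subring ℚ := (Int.castRingHom ℚ).range

lemma mem_Rint (z : ℤ) : (z : ℚ) ∈ Rint := ⟨z, rfl⟩

lemma Rint_cases {x : ℚ} (hx : x ∈ Rint) : ∃ z : ℤ, x = (z : ℚ) := by
  obtain ⟨z, hz⟩ := hx; exact ⟨z, hz.symm⟩

/-- Predicate: a power series has integer coefficients. -/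
def AllZ (φ : PowerSeries ℚ) : Prop := ∀ k, PowerSeries.coeff k φ ∈ Rint

lemma AllZ_one : AllZ 1 := fun k => by
  rw [PowerSeries.coeff_one]
  split_ifs
  exacts [Subring.one_mem _, Subring.zero_mem _]

lemma AllZ_mul {φ ψ : PowerSeries ℚ} (hφ : AllZ φ) (hψ : AllZ ψ) : AllZ (φ * ψ) := fun k => by
  rw [PowerSeries.coeff_mul]
  exact Subring.sum_mem _ fun p _ => Subring.mul_mem _ (hφ _) (hψ _)

lemma AllZ_pow {φ : PowerSeries ℚ} (hφ : AllZ φ) (m : ℕ) : AllZ (φ ^ m) := by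
  induction m with
  | zero => simpa using AllZ_one
  | succ m ih => rw [pow_succ]; exact AllZ_mul ih hφ

lemma AllZ_inv {A : PowerSeries ℚ} (hA : AllZ A) (h1 : PowerSeries.constantCoeff A = 1) :
    AllZ A⁻¹ := by
  have hmul : A * A⁻¹ = 1 := PowerSeries.mul_inv_cancel A (by rw [h1]; norm_num)
  intro k
  induction k using Nat.strong_induction_on with
  | _ k ih =>
    have hk := congrArg (PowerSeries.coeff k) hmul
    rw [PowerSeries.coeff_mul, Finset.Nat.sum_antidiagonal_eq_sum_range_succ_mk,
      Finset.sum_range_succ'] at hk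
    have h0 : PowerSeries.coeff 0 A = 1 := by
      rw [PowerSeries.coeff_zero_eq_constantCoeff_apply, h1]
    have hrw : PowerSeries.coeff k A⁻¹ =
        PowerSeries.coeff k 1 -
          ∑ i ∈ Finset.range k,
            PowerSeries.coeff (i + 1) A * PowerSeries.coeff (k - (i + 1)) A⁻¹ := by
      have := hk
      simp only [h0, Nat.sub_zero, one_mul] at this
      linarith [this]
    rw [hrw]
    refine Subring.sub_mem _ (AllZ_one k) (Subring.sum_mem _ fun i hi => ?_)
    have hlt : k - (i + 1) < k := by
      have := Finset.mem_range.mp hi; omega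
    exact Subring.mul_mem _ (hA _) (ih _ hlt)

lemma AllZ_E4 : AllZ E4 := by
  intro k
  rw [E4, PowerSeries.coeff_mk]
  split_ifs
  · exact Subring.one_mem _
  · refine Subring.mul_mem _ (by exact_mod_cast mem_Rint 240) ?_
    exact Subring.sum_mem _ fun d _ => ⟨(d : ℤ) ^ 3, by simp⟩

lemma AllZ_phi {Φ : PowerSeries ℚ} (hΦ : IsEulerProd Φ) : AllZ Φ := by
  intro k
  rw [hΦ k k le_rfl]
  have hfac : ∀ j : ℕ, AllZ (1 - (PowerSeries.X : PowerSeries ℚ) ^ (j + 1)) := by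
    intro j k
    rw [map_sub, PowerSeries.coeff_one, PowerSeries.coeff_X_pow]
    split_ifs <;>
      first
        | exact Subring.sub_mem _ (Subring.one_mem _) (Subring.one_mem _)
        | exact Subring.sub_mem _ (Subring.one_mem _) (Subring.zero_mem _)
        | exact Subring.sub_mem _ (Subring.zero_mem _) (Subring.one_mem _)
        | exact Subring.sub_mem _ (Subring.zero_mem _) (Subring.zero_mem _)
  exact Finset.prod_induction _ AllZ (fun a b => AllZ_mul) AllZ_one (fun j _ => hfac j) k

lemma constantCoeff_E4 : PowerSeries.constantCoeff E4 = 1 := by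
  rw [← PowerSeries.coeff_zero_eq_constantCoeff_apply, E4, PowerSeries.coeff_mk]
  simp

/-- p-integral rationals. -/
def PInt (p : ℕ) (x : ℚ) : Prop := ∃ a b : ℤ, ¬ (p : ℤ) ∣ b ∧ x = (a : ℚ) / (b : ℚ)

lemma PInt_zero {p : ℕ} (hp : p.Prime) : PInt p 0 := by
  refine ⟨0, 1, ?_, by simp⟩
  intro h
  have h2 := Int.isUnit_iff.mp (isUnit_of_dvd_one h)
  have := hp.two_le
  omega

lemma PInt_add {p : ℕ} (hp : p.Prime) {x y : ℚ} (hx : PInt p x) (hy : PInt p y) :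
    PInt p (x + y) := by
  obtain ⟨a, b, hb, rfl⟩ := hx
  obtain ⟨c, d, hd, rfl⟩ := hy
  have hb0 : (b : ℚ) ≠ 0 := Int.cast_ne_zero.mpr (fun h => hb (h ▸ dvd_zero _))
  have hd0 : (d : ℚ) ≠ 0 := Int.cast_ne_zero.mpr (fun h => hd (h ▸ dvd_zero _))
  refine ⟨a * d + b * c, b * d, ?_, ?_⟩
  · intro h
    rcases (Nat.prime_iff_prime_int.mp hp).dvd_mul.mp h with h | h
    exacts [hb h, hd h]
  · rw [div_add_div _ _ hb0 hd0]; push_cast; ring_nf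

lemma PInt_sum {p : ℕ} (hp : p.Prime) {s : Finset ℕ} {f : ℕ → ℚ}
    (h : ∀ i ∈ s, PInt p (f i)) : PInt p (∑ i ∈ s, f i) :=
  Finset.sum_induction f (PInt p) (fun _ _ => PInt_add hp) (PInt_zero hp) h

lemma PInt_val_nonneg {p : ℕ} (hp : p.Prime) {x : ℚ} (h : PInt p x) :
    0 ≤ padicValRat p x := by
  haveI := Fact.mk hp
  obtain ⟨a, b, hb, rfl⟩ := h
  by_cases ha : a = 0
  · simp [ha]
  have hb0 : b ≠ 0 := fun h => hb (h ▸ dvd_zero _)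
  rw [padicValRat.div (Int.cast_ne_zero.mpr ha) (Int.cast_ne_zero.mpr hb0),
    padicValRat.of_int, padicValRat.of_int, padicValInt.eq_zero_of_not_dvd hb]
  simp

lemma val_neg_one {p : ℕ} (hp : p.Prime) {A B : ℤ} (hA : ¬ (p : ℤ) ∣ A) (hB : ¬ (p : ℤ) ∣ B)
    {x : ℚ} (hx : x = (A : ℚ) / ((p : ℚ) * (B : ℚ))) : padicValRat p x = -1 := by
  haveI := Fact.mk hp
  have hA0 : A ≠ 0 := fun h => hA (h ▸ dvd_zero _)
  have hB0 : B ≠ 0 := fun h => hB (h ▸ dvd_zero _)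
  have hp0 : (p : ℚ) ≠ 0 := Nat.cast_ne_zero.mpr hp.pos.ne'
  rw [hx, padicValRat.div (Int.cast_ne_zero.mpr hA0)
      (mul_ne_zero hp0 (Int.cast_ne_zero.mpr hB0)),
    padicValRat.mul hp0 (Int.cast_ne_zero.mpr hB0), padicValRat.self hp.one_lt,
    padicValRat.of_int, padicValRat.of_int, padicValInt.eq_zero_of_not_dvd hA,
    padicValInt.eq_zero_of_not_dvd hB]
  simp

end HypAux

open HypAux

theorem hypergeometric_in_q_valuation (P Q : ℤ) (hP : 1 ≤ P) (hQ : 6 ≤ Q)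
    (hPQ : Int.gcd P Q = 1)
    (C : ℕ → ℚ) (hC0 : C 0 = 1)
    (hC : ∀ m : ℕ, 1 ≤ m → C m =
      ((144 * (Q : ℚ))⁻¹) ^ m *
        ∏ k ∈ Finset.range m,
          ((12 * (Q : ℚ) * (k : ℚ) + (Q : ℚ) + 6 * (P : ℚ)) *
              (12 * (Q : ℚ) * (k : ℚ) + 5 * (Q : ℚ) + 6 * (P : ℚ))) /
            (((Q : ℚ) * (k : ℚ) + (Q : ℚ) + (P : ℚ)) * ((k : ℚ) + 1)))
    (Φ : PowerSeries ℚ) (hΦ : IsEulerProd Φ)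
    (u : PowerSeries ℚ)
    (hu : u = PowerSeries.C (1728 : ℚ) * PowerSeries.X * Φ ^ 24 * (E4 ^ 3)⁻¹)
    (g : PowerSeries ℚ)
    (hg : ∀ n : ℕ, PowerSeries.coeff n g =
      ∑ m ∈ Finset.range (n + 1), C m * PowerSeries.coeff n (u ^ m)) :
    ∀ n : ℕ, 1 ≤ n → ∀ p : ℕ, p.Prime → (p : ℤ) = Q * (n : ℤ) + P →
      padicValRat p (PowerSeries.coeff n g) = -1 ∧
        ∀ m : ℕ, m < n → 0 ≤ padicValRat p (PowerSeries.coeff m g) := by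
  intro n hn p hp hpeq
  have hn1 : (1:ℤ) ≤ (n:ℤ) := by exact_mod_cast hn
  have hQn : 6*(n:ℤ) ≤ Q*n := mul_le_mul_of_nonneg_right hQ (by linarith)
  have hp6n : 6*(n:ℤ)+1 ≤ (p:ℤ) := by rw [hpeq]; linarith
  have hp7 : 7 ≤ (p:ℤ) := by linarith
  have hpp : Prime (p:ℤ) := Nat.prime_iff_prime_int.mp hp
  have hsmall : ∀ z : ℤ, z ≠ 0 → -(p:ℤ) < z → z < (p:ℤ) → ¬ (p:ℤ) ∣ z := by
    intro z h0 h1 h2 hd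
    have hle := Int.le_of_dvd (abs_pos.mpr h0) ((dvd_abs _ _).mpr hd)
    have := abs_lt.mpr ⟨h1, h2⟩
    omega
  have hQQn : Q ≤ Q*(n:ℤ) := le_mul_of_one_le_right (by linarith) hn1
  have hQnd : ¬(p:ℤ) ∣ Q := hsmall Q (by linarith) (by linarith) (by linarith [hpeq])
  have h2d : ¬(p:ℤ) ∣ 2 := hsmall 2 (by norm_num) (by linarith) (by linarith)
  have h3d : ¬(p:ℤ) ∣ 3 := hsmall 3 (by norm_num) (by linarith) (by linarith)
  have h1728 : ¬(p:ℤ) ∣ 1728 := by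
    intro hd
    rw [show (1728:ℤ) = 2^6 * 3^3 by norm_num] at hd
    rcases hpp.dvd_mul.mp hd with h | h
    exacts [h2d (hpp.dvd_of_dvd_pow h), h3d (hpp.dvd_of_dvd_pow h)]
  have h144 : ¬(p:ℤ) ∣ 144 := by
    intro hd
    rw [show (144:ℤ) = 2^4 * 3^2 by norm_num] at hd
    rcases hpp.dvd_mul.mp hd with h | h
    exacts [h2d (hpp.dvd_of_dvd_pow h), h3d (hpp.dvd_of_dvd_pow h)]
  have hN1 : ∀ k : ℕ, (k:ℤ) < n → ¬(p:ℤ) ∣ (12*Q*(k:ℤ) + Q + 6*P) := by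
    intro k hk hd
    have hk0 : (0:ℤ) ≤ (k:ℤ) := Int.natCast_nonneg k
    rw [show 12*Q*(k:ℤ) + Q + 6*P = Q*(12*(k:ℤ)+1-6*(n:ℤ)) + 6*(p:ℤ) by rw [hpeq]; ring] at hd
    have hd2 : (p:ℤ) ∣ Q*(12*(k:ℤ)+1-6*(n:ℤ)) := by
      simpa using hd.sub (dvd_mul_left (p:ℤ) 6)
    rcases hpp.dvd_mul.mp hd2 with h | h
    · exact hQnd h
    · exact hsmall _ (by omega) (by linarith) (by linarith) h
  have hN2 : ∀ k : ℕ, (k:ℤ) < n → ¬(p:ℤ) ∣ (12*Q*(k:ℤ) + 5*Q + 6*P) := by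
    intro k hk hd
    have hk0 : (0:ℤ) ≤ (k:ℤ) := Int.natCast_nonneg k
    rw [show 12*Q*(k:ℤ) + 5*Q + 6*P = Q*(12*(k:ℤ)+5-6*(n:ℤ)) + 6*(p:ℤ) by rw [hpeq]; ring] at hd
    have hd2 : (p:ℤ) ∣ Q*(12*(k:ℤ)+5-6*(n:ℤ)) := by
      simpa using hd.sub (dvd_mul_left (p:ℤ) 6)
    rcases hpp.dvd_mul.mp hd2 with h | h
    · exact hQnd h
    · exact hsmall _ (by omega) (by linarith) (by linarith) h
  have hNd : ∀ m : ℕ, m ≤ n →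
      ¬(p:ℤ) ∣ ∏ k ∈ Finset.range m, (12*Q*(k:ℤ)+Q+6*P)*(12*Q*(k:ℤ)+5*Q+6*P) := by
    intro m hm hd
    obtain ⟨k, hk, hkd⟩ := (hpp.dvd_finset_prod_iff _).mp hd
    have hkn : (k:ℤ) < n := by
      have h1 := Finset.mem_range.mp hk
      have : k < n := lt_of_lt_of_le h1 hm
      exact_mod_cast this
    rcases hpp.dvd_mul.mp hkd with h | h
    exacts [hN1 k hkn h, hN2 k hkn h]
  have h144Qd : ¬(p:ℤ) ∣ 144*Q := by
    intro h
    rcases hpp.dvd_mul.mp h with h | h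
    exacts [h144 h, hQnd h]
  have hDprod : ∀ m : ℕ, m < n →
      ¬(p:ℤ) ∣ ∏ k ∈ Finset.range m, (Q*(k:ℤ)+Q+P)*((k:ℤ)+1) := by
    intro m hm hd
    obtain ⟨k, hk, hkd⟩ := (hpp.dvd_finset_prod_iff _).mp hd
    have hk0 : (0:ℤ) ≤ (k:ℤ) := Int.natCast_nonneg k
    have hkn : (k:ℤ) + 1 < (n:ℤ) := by
      have h1 := Finset.mem_range.mp hk
      have : k + 1 < n := by omega
      exact_mod_cast this
    rcases hpp.dvd_mul.mp hkd with h | h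
    · have hlt : Q*((k:ℤ)+1) < Q*(n:ℤ) := mul_lt_mul_of_pos_left hkn (by linarith)
      have hnn : 0 ≤ Q*(k:ℤ) := mul_nonneg (by linarith) hk0
      refine hsmall _ (by linarith) (by linarith) ?_ h
      rw [hpeq]; linarith
    · exact hsmall _ (by omega) (by linarith) (by linarith) h
  have hDd : ∀ m : ℕ, m < n →
      ¬(p:ℤ) ∣ (144*Q)^m * ∏ k ∈ Finset.range m, (Q*(k:ℤ)+Q+P)*((k:ℤ)+1) := by
    intro m hm h
    rcases hpp.dvd_mul.mp h with h | h
    exacts [h144Qd (hpp.dvd_of_dvd_pow h), hDprod m hm h]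
  -- the coefficients C m as quotients of integers
  have hCeq : ∀ m : ℕ, C m =
      ((∏ k ∈ Finset.range m, (12*Q*(k:ℤ)+Q+6*P)*(12*Q*(k:ℤ)+5*Q+6*P) : ℤ) : ℚ) /
      (((144*Q)^m * ∏ k ∈ Finset.range m, (Q*(k:ℤ)+Q+P)*((k:ℤ)+1) : ℤ) : ℚ) := by
    intro m
    rcases Nat.eq_zero_or_pos m with rfl | hm
    · simp [hC0]
    · have hnum : ((∏ k ∈ Finset.range m, (12*Q*(k:ℤ)+Q+6*P)*(12*Q*(k:ℤ)+5*Q+6*P) : ℤ) : ℚ)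
          = ∏ k ∈ Finset.range m,
              ((12 * (Q : ℚ) * (k : ℚ) + (Q : ℚ) + 6 * (P : ℚ)) *
                (12 * (Q : ℚ) * (k : ℚ) + 5 * (Q : ℚ) + 6 * (P : ℚ))) := by
        rw [Int.cast_prod]
        exact Finset.prod_congr rfl fun k _ => by push_cast; ring
      have hden : (((144*Q)^m * ∏ k ∈ Finset.range m, (Q*(k:ℤ)+Q+P)*((k:ℤ)+1) : ℤ) : ℚ)
          = (144 * (Q : ℚ))^m * ∏ k ∈ Finset.range m,
              (((Q : ℚ) * (k : ℚ) + (Q : ℚ) + (P : ℚ)) * ((k : ℚ) + 1)) := by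
        rw [Int.cast_mul, Int.cast_prod, Int.cast_pow]
        rw [Finset.prod_congr rfl fun (k : ℕ) (_ : k ∈ Finset.range m) =>
          (by push_cast; ring :
            (((Q*(k:ℤ)+Q+P)*((k:ℤ)+1) : ℤ) : ℚ)
              = ((Q : ℚ) * (k : ℚ) + (Q : ℚ) + (P : ℚ)) * ((k : ℚ) + 1))]
        push_cast
        ring
      rw [hC m hm, Finset.prod_div_distrib, hnum, hden]
      generalize (∏ k ∈ Finset.range m,
          ((12 * (Q : ℚ) * (k : ℚ) + (Q : ℚ) + 6 * (P : ℚ)) *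
            (12 * (Q : ℚ) * (k : ℚ) + 5 * (Q : ℚ) + 6 * (P : ℚ)))) = Nq
      generalize (∏ k ∈ Finset.range m,
          (((Q : ℚ) * (k : ℚ) + (Q : ℚ) + (P : ℚ)) * ((k : ℚ) + 1))) = Dq
      simp only [div_eq_mul_inv, mul_inv, inv_pow]
      ring_nf
      simp only [one_div]
  -- u has integer coefficients
  have hAllZu : AllZ u := by
    rw [hu]
    have hE43 : PowerSeries.constantCoeff (E4^3) = 1 := by
      rw [map_pow, constantCoeff_E4]; norm_num
    have hC1728 : AllZ (PowerSeries.C (1728 : ℚ)) := fun k => by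
      rw [PowerSeries.coeff_C]
      split_ifs
      · exact_mod_cast mem_Rint 1728
      · exact Subring.zero_mem _
    have hX : AllZ (PowerSeries.X : PowerSeries ℚ) := fun k => by
      rw [PowerSeries.coeff_X]
      split_ifs
      exacts [Subring.one_mem _, Subring.zero_mem _]
    exact AllZ_mul (AllZ_mul (AllZ_mul hC1728 hX) (AllZ_pow (AllZ_phi hΦ) 24))
      (AllZ_inv (AllZ_pow AllZ_E4 3) hE43)
  have hAllZum : ∀ m, AllZ (u^m) := fun m => AllZ_pow hAllZu m
  -- leading coefficient of u^n
  have hun : PowerSeries.coeff n (u^n) = 1728^n := by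
    have hΦ0 : PowerSeries.constantCoeff Φ = 1 := by
      rw [← PowerSeries.coeff_zero_eq_constantCoeff_apply, hΦ 0 0 le_rfl]
      simp
    have hE43 : PowerSeries.constantCoeff (E4^3) = 1 := by
      rw [map_pow, constantCoeff_E4]; norm_num
    have hw : PowerSeries.constantCoeff (Φ^24 * (E4^3)⁻¹) = 1 := by
      rw [map_mul, map_pow, hΦ0, PowerSeries.constantCoeff_inv, hE43]
      norm_num
    have hu' : u = PowerSeries.C (1728 : ℚ) * PowerSeries.X * (Φ^24 * (E4^3)⁻¹) := by
      rw [hu, mul_assoc]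
    rw [hu', mul_pow, mul_pow, ← map_pow, mul_assoc, PowerSeries.coeff_C_mul]
    have h2 := PowerSeries.coeff_X_pow_mul ((Φ^24 * (E4^3)⁻¹)^n) n 0
    rw [zero_add] at h2
    rw [h2, PowerSeries.coeff_zero_eq_constantCoeff_apply, map_pow, hw, one_pow, mul_one]
  -- each term with index < n is p-integral
  have hPterm : ∀ m j : ℕ, j < n → PInt p (C j * PowerSeries.coeff m (u^j)) := by
    intro m j hj
    obtain ⟨z, hz⟩ := Rint_cases (hAllZum j m)
    refine ⟨(∏ k ∈ Finset.range j, (12*Q*(k:ℤ)+Q+6*P)*(12*Q*(k:ℤ)+5*Q+6*P)) * z,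
      (144*Q)^j * ∏ k ∈ Finset.range j, (Q*(k:ℤ)+Q+P)*((k:ℤ)+1), hDd j hj, ?_⟩
    rw [hCeq j, hz]
    push_cast
    ring
  have part2 : ∀ m : ℕ, m < n → 0 ≤ padicValRat p (PowerSeries.coeff m g) := by
    intro m hm
    rw [hg m]
    refine PInt_val_nonneg hp (PInt_sum hp fun j hj => hPterm m j ?_)
    have := Finset.mem_range.mp hj
    omega
  refine ⟨?_, part2⟩
  rw [hg n, Finset.sum_range_succ, hun]
  obtain ⟨a, b, hb, hSab⟩ :
      PInt p (∑ m ∈ Finset.range n, C m * PowerSeries.coeff n (u^m)) :=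
    PInt_sum hp fun j hj => hPterm n j (Finset.mem_range.mp hj)
  have hnp : (n:ℤ) < (p:ℤ) := by linarith
  obtain ⟨n', rfl⟩ : ∃ n', n = n' + 1 := ⟨n - 1, by omega⟩
  set Nn : ℤ := ∏ k ∈ Finset.range (n'+1), (12*Q*(k:ℤ)+Q+6*P)*(12*Q*(k:ℤ)+5*Q+6*P) with hNn
  set En : ℤ := (144*Q)^(n'+1) * (∏ k ∈ Finset.range n', (Q*(k:ℤ)+Q+P)*((k:ℤ)+1)) * ((n':ℤ)+1)
    with hEn
  have hsplit : ((144*Q)^(n'+1) * ∏ k ∈ Finset.range (n'+1), (Q*(k:ℤ)+Q+P)*((k:ℤ)+1) : ℤ)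
      = (p:ℤ) * En := by
    rw [Finset.prod_range_succ]
    have hlastf : Q*((n':ℕ):ℤ)+Q+P = (p:ℤ) := by
      push_cast at hpeq ⊢
      linarith
    rw [hlastf, hEn]
    ring
  have hEnd : ¬(p:ℤ) ∣ En := by
    rw [hEn]
    intro hd
    rcases hpp.dvd_mul.mp hd with h | h
    · rcases hpp.dvd_mul.mp h with h1 | h1
      · exact h144Qd (hpp.dvd_of_dvd_pow h1)
      · exact hDprod n' (by omega) h1
    · refine hsmall _ (by omega) (by push_cast at hnp ⊢; linarith) (by push_cast at hnp ⊢; linarith) h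
  have hcd : ¬(p:ℤ) ∣ 1728^(n'+1) * Nn := by
    intro h
    rcases hpp.dvd_mul.mp h with h | h
    exacts [h1728 (hpp.dvd_of_dvd_pow h), hNd (n'+1) le_rfl h]
  have hlast : C (n'+1) * (1728:ℚ)^(n'+1)
      = ((1728^(n'+1) * Nn : ℤ) : ℚ) / ((p:ℚ) * ((En : ℤ) : ℚ)) := by
    rw [hCeq (n'+1), ← hNn, hsplit]
    push_cast
    ring
  rw [hSab, hlast]
  have hb0 : (b:ℚ) ≠ 0 := Int.cast_ne_zero.mpr (fun h => hb (h ▸ dvd_zero _))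
  have hEn0 : (En:ℚ) ≠ 0 := Int.cast_ne_zero.mpr (fun h => hEnd (h ▸ dvd_zero _))
  have hp0 : (p:ℚ) ≠ 0 := Nat.cast_ne_zero.mpr hp.pos.ne'
  rw [div_add_div _ _ hb0 (mul_ne_zero hp0 hEn0)]
  refine val_neg_one hp (A := a * ((p:ℤ)*En) + b * (1728^(n'+1) * Nn))
    (B := b * En) ?_ ?_ ?_
  · intro h
    have hsub : (p:ℤ) ∣ b * (1728^(n'+1) * Nn) := by
      have h1 : (p:ℤ) ∣ a * ((p:ℤ)*En) := ⟨a * En, by ring⟩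
      simpa using h.sub h1
    rcases hpp.dvd_mul.mp hsub with h1 | h1
    exacts [hb h1, hcd h1]
  · intro h
    rcases hpp.dvd_mul.mp h with h1 | h1
    exacts [hb h1, hEnd h1]
  · push_cast
    ring
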